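/- Let C be a simple cycle through x and y contained in a set Q, with z a neighbor of y on C, z ∈ Q, and suppose δ(y) = d(x,y), δ(z) = d(x,z), and δ(p) ≥ 0 for a vertex p. Then the detected cycle length ℓ(C') = δ(y) + δ(z) + w(y,z) − 2δ(p) satisfies ℓ(C') ≤ ℓ(C). -/

import Mathlib

open scoped ENNReal

/-- Weighted length of a walk: sum of the weights of its edges. -/
noncomputable def wlen {V : Type*} {G : SimpleGraph V} (w : Sym2 V → NNReal) {u v : V}
    (p : G.Walk u v) : ℝ≥0∞ :=
  (p.edges.map (fun e => ((w e : NNReal) : ℝ≥0∞))).sum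

/-- Shortest-path distance between two vertices (∞ if no path exists). -/
noncomputable def wdist {V : Type*} (G : SimpleGraph V) (w : Sym2 V → NNReal) (x y : V) : ℝ≥0∞ :=
  ⨅ (p : {p : G.Walk x y // p.IsPath}), wlen w p.1

/-- Distance from a vertex to a cycle: minimum distance to a vertex of the cycle. -/
noncomputable def dcyc {V : Type*} (G : SimpleGraph V) (w : Sym2 V → NNReal) (x : V) {a : V}
    (c : G.Walk a a) : ℝ≥0∞ :=
  ⨅ y ∈ c.support, wdist G w x y

section aux

variable {V : Type*} {G : SimpleGraph V} {w : Sym2 V → NNReal}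

lemma wlen_nil {u : V} : wlen w (SimpleGraph.Walk.nil : G.Walk u u) = 0 := rfl

lemma wlen_cons {u u' v : V} (h : G.Adj u u') (q : G.Walk u' v) :
    wlen w (SimpleGraph.Walk.cons h q) = (w s(u, u') : ℝ≥0∞) + wlen w q := by
  simp [wlen]

lemma wlen_reverse {u v : V} (q : G.Walk u v) : wlen w q.reverse = wlen w q := by
  simp only [wlen, SimpleGraph.Walk.edges_reverse, List.map_reverse, List.sum_reverse]

lemma wlen_append {u v t : V} (q : G.Walk u v) (r : G.Walk v t) :
    wlen w (q.append r) = wlen w q + wlen w r := by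
  simp [wlen, SimpleGraph.Walk.edges_append]

lemma wdist_le_wlen {u v : V} (q : G.Walk u v) : wdist G w u v ≤ wlen w q := by
  classical
  refine le_trans (iInf_le _ ⟨q.bypass, q.bypass_isPath⟩) ?_
  have hsub : q.bypass.edges ⊆ q.edges := q.edges_bypass_subset
  have hnd : q.bypass.edges.Nodup := q.bypass_isPath.isTrail.edges_nodup
  obtain ⟨l, hperm, hsl⟩ := List.subperm_of_subset hnd hsub
  calc wlen w q.bypass = (l.map (fun e => ((w e : NNReal) : ℝ≥0∞))).sum :=
        ((hperm.map _).sum_eq).symm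
    _ ≤ wlen w q := List.Sublist.sum_le_sum (hsl.map _) (fun a _ => zero_le)

lemma wdist_self (x : V) : wdist G w x x = 0 := by
  refine le_antisymm ?_ zero_le
  exact le_trans (iInf_le _ ⟨SimpleGraph.Walk.nil, SimpleGraph.Walk.IsPath.nil⟩)
    (le_of_eq wlen_nil)

lemma wdist_triangle (x u v : V) :
    wdist G w x v ≤ wdist G w x u + wdist G w u v := by
  conv_rhs => rw [wdist, ENNReal.iInf_add]
  refine le_iInf fun q => ?_
  conv_rhs => rw [wdist, ENNReal.add_iInf]
  refine le_iInf fun r => ?_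
  calc wdist G w x v ≤ wlen w (q.1.append r.1) := wdist_le_wlen _
    _ = wlen w q.1 + wlen w r.1 := wlen_append _ _

lemma key {x y z : V} : ∀ {u v : V} (q : G.Walk u v), s(y, z) ∈ q.edges →
    wdist G w x y + wdist G w x z + (w s(y, z) : ℝ≥0∞)
      ≤ wlen w q + wdist G w x u + wdist G w x v := by
  intro u v q
  induction q with
  | nil => simp
  | @cons u u' v h q ih =>
    intro hmem
    rw [SimpleGraph.Walk.edges_cons, List.mem_cons] at hmem
    rw [wlen_cons]
    have h2 : wdist G w x u' ≤ wdist G w x v + wlen w q :=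
      calc wdist G w x u' ≤ wdist G w x v + wdist G w v u' := wdist_triangle x v u'
        _ ≤ wdist G w x v + wlen w q :=
            add_le_add_right (le_trans (wdist_le_wlen q.reverse)
              (le_of_eq (wlen_reverse q))) _
    rcases hmem with heq | hmem
    · rcases Sym2.eq_iff.mp heq with ⟨rfl, rfl⟩ | ⟨rfl, rfl⟩
      · calc wdist G w x y + wdist G w x z + (w s(y, z) : ℝ≥0∞)
            ≤ wdist G w x y + (wdist G w x v + wlen w q) + (w s(y, z) : ℝ≥0∞) :=
              add_le_add_left (add_le_add_right h2 _) _
          _ = (w s(y, z) : ℝ≥0∞) + wlen w q + wdist G w x y + wdist G w x v := by ring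
      · rw [show s(z, y) = s(y, z) from Sym2.eq_swap]
        calc wdist G w x y + wdist G w x z + (w s(y, z) : ℝ≥0∞)
            ≤ (wdist G w x v + wlen w q) + wdist G w x z + (w s(y, z) : ℝ≥0∞) :=
              add_le_add_left (add_le_add_left h2 _) _
          _ = (w s(y, z) : ℝ≥0∞) + wlen w q + wdist G w x z + wdist G w x v := by ring
    · have step : wdist G w x u' ≤ wdist G w x u + (w s(u, u') : ℝ≥0∞) :=
        calc wdist G w x u' ≤ wdist G w x u + wdist G w u u' := wdist_triangle x u u'
          _ ≤ wdist G w x u + (w s(u, u') : ℝ≥0∞) := by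
              refine add_le_add_right (le_trans
                (wdist_le_wlen (SimpleGraph.Walk.cons h SimpleGraph.Walk.nil)) ?_) _
              rw [wlen_cons, wlen_nil, add_zero]
      calc wdist G w x y + wdist G w x z + (w s(y, z) : ℝ≥0∞)
          ≤ wlen w q + wdist G w x u' + wdist G w x v := ih hmem
        _ ≤ wlen w q + (wdist G w x u + (w s(u, u') : ℝ≥0∞)) + wdist G w x v :=
            add_le_add_left (add_le_add_right step _) _
        _ = (w s(u, u') : ℝ≥0∞) + wlen w q + wdist G w x u + wdist G w x v := by ring

end aux

/-- for a simple cycle C through x containing the edge (y,z), contained in Q,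
with δ(y) = d(x,y), δ(z) = d(x,z) and δ(p) ≥ 0, the detected cycle length
ℓ(C') = δ(y) + δ(z) + w(y,z) − 2δ(p) satisfies ℓ(C') ≤ ℓ(C). -/
theorem stmt15 {V : Type*} (G : SimpleGraph V) (w : Sym2 V → NNReal)
    (hw : ∀ e ∈ G.edgeSet, 0 < w e) (x y z p : V) (Q : Set V)
    {a : V} (C : G.Walk a a) (hC : C.IsCycle)
    (hx : x ∈ C.support) (hedge : s(y, z) ∈ C.edges)
    (hQ : ∀ u ∈ C.support, u ∈ Q) (hyQ : y ∈ Q) (hzQ : z ∈ Q)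
    (δ : V → ℝ≥0∞)
    (hδy : δ y = wdist G w x y) (hδz : δ z = wdist G w x z) (hδp : 0 ≤ δ p) :
    δ y + δ z + (w s(y, z) : ℝ≥0∞) - 2 * δ p ≤ wlen w C := by
  classical
  refine le_trans tsub_le_self ?_
  rw [hδy, hδz]
  have hperm : List.Perm (C.rotate x hx).edges C.edges := (C.rotate_edges x hx).perm
  have hedgeD : s(y, z) ∈ (C.rotate x hx).edges := hperm.mem_iff.mpr hedge
  have hlen : wlen w (C.rotate x hx) = wlen w C := (hperm.map _).sum_eq
  have := key (w := w) (x := x) (C.rotate x hx) hedgeD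
  rw [hlen, wdist_self, add_zero, add_zero] at this
  exact this
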